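/- Let p: ℝⁿ → (0,∞] be a measurable variable exponent with p₊ := ess sup p ≤ 1. Then for all nonnegative measurable functions f, g on ℝⁿ, the reverse Minkowski inequality holds: ‖f‖_{L^{p(·)}} + ‖g‖_{L^{p(·)}} ≤ ‖f+g‖_{L^{p(·)}}. -/

import Mathlib

open MeasureTheory
open scoped ENNReal

noncomputable section

/-- The building block `ρ_{p(x)}(t)` of the variable-exponent modular:
`t^p` when `p < ∞`, and `0` for `t ≤ 1`, `∞` for `t > 1`, when `p = ∞`. -/
def rhoVar (p : ℝ≥0∞) (t : ℝ≥0∞) : ℝ≥0∞ :=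
  if p = ∞ then (if t ≤ 1 then 0 else ∞) else t ^ p.toReal

/-- The variable-exponent modular `ϱ_{p(·)}(f) = ∫ ρ_{p(x)}(f(x)) dx` for a
nonnegative (`ℝ≥0∞`-valued) function `f` on `ℝⁿ` (as `EuclideanSpace ℝ (Fin n)`). -/
def varModular {n : ℕ} (p : EuclideanSpace ℝ (Fin n) → ℝ≥0∞)
    (f : EuclideanSpace ℝ (Fin n) → ℝ≥0∞) : ℝ≥0∞ :=
  ∫⁻ x, rhoVar (p x) (f x)

/-- The variable-exponent Lebesgue (Luxemburg) quasi-norm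
`‖f‖_{L^{p(·)}} = inf {λ > 0 : ϱ_{p(·)}(f/λ) ≤ 1}`. -/
def varNorm {n : ℕ} (p : EuclideanSpace ℝ (Fin n) → ℝ≥0∞)
    (f : EuclideanSpace ℝ (Fin n) → ℝ≥0∞) : ℝ≥0∞ :=
  sInf {lam : ℝ≥0∞ | 0 < lam ∧ varModular p (fun x => f x / lam) ≤ 1}

lemma rhoVar_mono (p : ℝ≥0∞) {s t : ℝ≥0∞} (h : s ≤ t) : rhoVar p s ≤ rhoVar p t := by
  unfold rhoVar
  by_cases h1 : p = ∞
  · simp only [if_pos h1]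
    by_cases h3 : t ≤ 1
    · rw [if_pos (h.trans h3), if_pos h3]
    · rw [if_neg h3]; exact le_top
  · simp only [if_neg h1]
    exact ENNReal.rpow_le_rpow h ENNReal.toReal_nonneg

lemma varNorm_mono {n : ℕ} (p : EuclideanSpace ℝ (Fin n) → ℝ≥0∞)
    {f g : EuclideanSpace ℝ (Fin n) → ℝ≥0∞} (h : ∀ x, f x ≤ g x) :
    varNorm p f ≤ varNorm p g := by
  apply sInf_le_sInf
  rintro lam ⟨hl, hm⟩
  refine ⟨hl, le_trans ?_ hm⟩
  exact lintegral_mono fun x => rhoVar_mono _ (ENNReal.div_le_div_right (h x) _)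

lemma rhoVar_measurable {n : ℕ} {p f : EuclideanSpace ℝ (Fin n) → ℝ≥0∞}
    (hp : Measurable p) (hf : Measurable f) :
    Measurable fun x => rhoVar (p x) (f x) := by
  unfold rhoVar
  apply Measurable.ite (hp (measurableSet_singleton ∞))
  · exact Measurable.ite (hf measurableSet_Iic) measurable_const measurable_const
  · exact hf.pow hp.ennreal_toReal

/-- Concavity inequality: for `0 < q ≤ 1` and weights summing to 1,
`w₁ * u ^ q + w₂ * v ^ q ≤ (w₁ * u + w₂ * v) ^ q` in `ℝ≥0∞`. -/
lemma weighted_rpow_le {w₁ w₂ u v : ℝ≥0∞} (hw : w₁ + w₂ = 1) {q : ℝ}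
    (hq0 : 0 < q) (hq1 : q ≤ 1) :
    w₁ * u ^ q + w₂ * v ^ q ≤ (w₁ * u + w₂ * v) ^ q := by
  have h := ENNReal.rpow_arith_mean_le_arith_mean2_rpow w₁ w₂ (u ^ q) (v ^ q) hw
    (p := 1 / q) (by rw [le_div_iff₀ hq0, one_mul]; exact hq1)
  have hinv : ∀ z : ℝ≥0∞, (z ^ q) ^ (1 / q) = z := by
    intro z
    rw [one_div, ENNReal.rpow_rpow_inv hq0.ne']
  rw [hinv, hinv] at h
  calc w₁ * u ^ q + w₂ * v ^ q
      = (((w₁ * u ^ q + w₂ * v ^ q) ^ (1 / q)) ^ q) := by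
        rw [one_div, ENNReal.rpow_inv_rpow hq0.ne']
    _ ≤ (w₁ * u + w₂ * v) ^ q := ENNReal.rpow_le_rpow h hq0.le

/-- If `p : ℝⁿ → (0,∞]` is a measurable variable exponent with
`p₊ = ess sup p ≤ 1`, then for all nonnegative measurable `f, g`, the reverse
Minkowski inequality `‖f‖_{p(·)} + ‖g‖_{p(·)} ≤ ‖f+g‖_{p(·)}` holds. -/
theorem reverse_minkowski_varNorm {n : ℕ}
    (p : EuclideanSpace ℝ (Fin n) → ℝ≥0∞)
    (hp_meas : Measurable p)
    (hp_pos : ∀ x, 0 < p x)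
    (hp_plus : essSup p (volume : Measure (EuclideanSpace ℝ (Fin n))) ≤ 1)
    (f g : EuclideanSpace ℝ (Fin n) → ℝ≥0∞)
    (hf : Measurable f) (hg : Measurable g) :
    varNorm p f + varNorm p g ≤ varNorm p (f + g) := by
  by_cases hA0 : varNorm p f = 0
  · rw [hA0, zero_add]
    exact varNorm_mono p fun x => le_add_self
  by_cases hB0 : varNorm p g = 0
  · rw [hB0, add_zero]
    exact varNorm_mono p fun x => le_self_add
  set A := varNorm p f with hAdef
  set B := varNorm p g with hBdef
  refine le_sInf ?_
  rintro μ ⟨hμpos, hμmod⟩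
  by_contra hcon
  push_neg at hcon
  have hμtop : μ ≠ ∞ := hcon.ne_top
  have hmemμ : μ ∈ {lam : ℝ≥0∞ | 0 < lam ∧ varModular p (fun x => (f + g) x / lam) ≤ 1} :=
    ⟨hμpos, hμmod⟩
  have hAμ : A ≤ μ := le_trans (varNorm_mono p fun x => le_self_add) (sInf_le hmemμ)
  have hBμ : B ≤ μ := le_trans (varNorm_mono p fun x => le_add_self) (sInf_le hmemμ)
  have hAtop : A ≠ ∞ := (hAμ.trans_lt hμtop.lt_top).ne
  have hBtop : B ≠ ∞ := (hBμ.trans_lt hμtop.lt_top).ne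
  have hS0 : A + B ≠ 0 := by simp [hA0, hB0]
  have hStop : A + B ≠ ∞ := by simp [hAtop, hBtop]
  set l₁ := μ * A / (A + B) with hl₁def
  set l₂ := μ * B / (A + B) with hl₂def
  have hlsum : l₁ + l₂ = μ := by
    rw [hl₁def, hl₂def, ENNReal.div_add_div_same, ← mul_add, mul_div_assoc, ENNReal.div_self hS0 hStop, mul_one]
  have hfrac_lt : μ / (A + B) < 1 := by
    rw [ENNReal.div_lt_iff (Or.inl hS0) (Or.inl hStop), one_mul]
    exact hcon
  have hl₁A : l₁ < A := by
    have : l₁ = μ / (A + B) * A := by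
      rw [hl₁def, div_eq_mul_inv, div_eq_mul_inv]; ring
    rw [this]
    calc μ / (A + B) * A < 1 * A :=
          (ENNReal.mul_lt_mul_iff_left hA0 hAtop).mpr hfrac_lt
      _ = A := one_mul A
  have hl₂B : l₂ < B := by
    have : l₂ = μ / (A + B) * B := by
      rw [hl₂def, div_eq_mul_inv, div_eq_mul_inv]; ring
    rw [this]
    calc μ / (A + B) * B < 1 * B :=
          (ENNReal.mul_lt_mul_iff_left hB0 hBtop).mpr hfrac_lt
      _ = B := one_mul B
  have hl₁0 : l₁ ≠ 0 := by
    rw [hl₁def]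
    exact (ENNReal.div_pos (by simp [hμpos.ne', hA0]) hStop).ne'
  have hl₂0 : l₂ ≠ 0 := by
    rw [hl₂def]
    exact (ENNReal.div_pos (by simp [hμpos.ne', hB0]) hStop).ne'
  have hl₁top : l₁ ≠ ∞ := (hl₁A.trans_le (hAμ.trans hμtop.lt_top.le)).ne
  have hl₂top : l₂ ≠ ∞ := (hl₂B.trans_le (hBμ.trans hμtop.lt_top.le)).ne
  -- the modulars at `l₁, l₂` are > 1
  have hm₁ : 1 < varModular p (fun x => f x / l₁) := by
    by_contra hle
    push_neg at hle
    have hmem : l₁ ∈ {lam : ℝ≥0∞ | 0 < lam ∧ varModular p (fun x => f x / lam) ≤ 1} :=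
      ⟨pos_iff_ne_zero.mpr hl₁0, hle⟩
    exact absurd (sInf_le hmem) (not_le.mpr hl₁A)
  have hm₂ : 1 < varModular p (fun x => g x / l₂) := by
    by_contra hle
    push_neg at hle
    have hmem : l₂ ∈ {lam : ℝ≥0∞ | 0 < lam ∧ varModular p (fun x => g x / lam) ≤ 1} :=
      ⟨pos_iff_ne_zero.mpr hl₂0, hle⟩
    exact absurd (sInf_le hmem) (not_le.mpr hl₂B)
  -- weights
  set w₁ := l₁ / μ with hw₁def
  set w₂ := l₂ / μ with hw₂def
  have hwsum : w₁ + w₂ = 1 := by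
    rw [hw₁def, hw₂def, ENNReal.div_add_div_same, hlsum, ENNReal.div_self hμpos.ne' hμtop]
  have hw₁0 : w₁ ≠ 0 := (ENNReal.div_pos hl₁0 hμtop).ne'
  have hw₂0 : w₂ ≠ 0 := (ENNReal.div_pos hl₂0 hμtop).ne'
  have hw₁top : w₁ ≠ ∞ := by
    rw [hw₁def]; exact (ENNReal.div_lt_top hl₁top hμpos.ne').ne
  have hw₂top : w₂ ≠ ∞ := by
    rw [hw₂def]; exact (ENNReal.div_lt_top hl₂top hμpos.ne').ne
  -- a.e. bound on the exponent
  have hple : ∀ᵐ x : EuclideanSpace ℝ (Fin n) ∂(volume), p x ≤ 1 :=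
    (ENNReal.ae_le_essSup p).mono fun x hx => hx.trans hp_plus
  have meas₁ : Measurable fun x => rhoVar (p x) (f x / l₁) :=
    rhoVar_measurable hp_meas (hf.div_const _)
  have meas₂ : Measurable fun x => rhoVar (p x) (g x / l₂) :=
    rhoVar_measurable hp_meas (hg.div_const _)
  -- key inequality via concavity
  have key : w₁ * varModular p (fun x => f x / l₁) + w₂ * varModular p (fun x => g x / l₂)
      ≤ varModular p (fun x => (f + g) x / μ) := by
    unfold varModular
    rw [← lintegral_const_mul _ meas₁, ← lintegral_const_mul _ meas₂,
      ← lintegral_add_left (meas₁.const_mul w₁)]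
    refine lintegral_mono_ae ?_
    filter_upwards [hple] with x hx
    have hpx_ne_top : p x ≠ ∞ := (hx.trans_lt (by norm_num)).ne
    set q := (p x).toReal with hqdef
    have hq0 : 0 < q := ENNReal.toReal_pos (hp_pos x).ne' hpx_ne_top
    have hq1 : q ≤ 1 := by
      have := ENNReal.toReal_mono (by norm_num : (1 : ℝ≥0∞) ≠ ∞) hx
      simpa using this
    simp only [rhoVar, if_neg hpx_ne_top, ← hqdef]
    have hcancel : ∀ (l a : ℝ≥0∞), l ≠ 0 → l ≠ ∞ → l / μ * (a / l) = a / μ := by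
      intro l a hl0 hlt
      rw [div_eq_mul_inv, div_eq_mul_inv, div_eq_mul_inv]
      calc l * μ⁻¹ * (a * l⁻¹) = l * l⁻¹ * (a * μ⁻¹) := by ring
        _ = a * μ⁻¹ := by rw [ENNReal.mul_inv_cancel hl0 hlt, one_mul]
    have hsum : w₁ * (f x / l₁) + w₂ * (g x / l₂) = (f + g) x / μ := by
      rw [hw₁def, hw₂def, hcancel _ _ hl₁0 hl₁top, hcancel _ _ hl₂0 hl₂top]
      simp [ENNReal.div_add_div_same]
    calc w₁ * (f x / l₁) ^ q + w₂ * (g x / l₂) ^ q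
        ≤ (w₁ * (f x / l₁) + w₂ * (g x / l₂)) ^ q := weighted_rpow_le hwsum hq0 hq1
      _ = ((f + g) x / μ) ^ q := by rw [hsum]
  -- derive the contradiction
  have hstrict : (1 : ℝ≥0∞) <
      w₁ * varModular p (fun x => f x / l₁) + w₂ * varModular p (fun x => g x / l₂) := by
    have h1 : w₁ ≤ w₁ * varModular p (fun x => f x / l₁) :=
      le_mul_of_one_le_right' hm₁.le
    have h2 : w₂ < w₂ * varModular p (fun x => g x / l₂) := by
      conv_lhs => rw [← mul_one w₂]
      exact (ENNReal.mul_lt_mul_iff_right hw₂0 hw₂top).mpr hm₂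
    calc (1 : ℝ≥0∞) = w₁ + w₂ := hwsum.symm
      _ < _ := ENNReal.add_lt_add_of_le_of_lt hw₁top h1 h2
  exact absurd (hstrict.trans_le (key.trans hμmod)) (lt_irrefl 1)
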